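/- For a discrete community c ∈ {0,1}ⁿ with positive volume, the gradient of σ-conductance is bounded by (w_i/a_{cV})·((1−2c_i)σ − 2) ≤ ∇φ_σ(c)_i ≤ (w_i/a_{cV})·((1−2c_i)σ + 1). In particular, if σ > 2 then ∇φ_σ(c)_i > 0 whenever c_i = 0, and ∇φ_σ(c)_i < 0 whenever c_i = 1. -/
import Mathlib


open Finset

/-- degree / weight of node `i`. -/
noncomputable def w {n : ℕ} (A : Matrix (Fin n) (Fin n) ℝ) (i : Fin n) : ℝ := ∑ j, A i j

/-- Gradient of σ-conductance at a discrete community (formula from the paper). -/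
noncomputable def gradPhiSigma {n : ℕ} (A : Matrix (Fin n) (Fin n) ℝ) (σ : ℝ)
    (c : Fin n → ℝ) (i : Fin n) : ℝ :=
  w A i / (∑ j, c j * w A j) *
    ((∑ k, ∑ j, c k * A k j * c j) / (∑ j, c j * w A j)
      + (1 - 2 * c i) * σ - 2 * (∑ j, A i j * c j) / w A i)

/-- bounds on the gradient of σ-conductance at a discrete community,
and the sign consequences for σ > 2. -/
theorem stmt_4 {n : ℕ} (A : Matrix (Fin n) (Fin n) ℝ)
    (hsym : ∀ i j, A i j = A j i) (hnonneg : ∀ i j, 0 ≤ A i j)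
    (hw : ∀ i, 0 < w A i)
    (σ : ℝ) (hσ : 0 ≤ σ) (c : Fin n → ℝ) (hdisc : ∀ i, c i = 0 ∨ c i = 1)
    (hvol : 0 < ∑ j, c j * w A j) (i : Fin n) :
    (w A i / (∑ j, c j * w A j) * ((1 - 2 * c i) * σ - 2) ≤ gradPhiSigma A σ c i ∧
      gradPhiSigma A σ c i ≤ w A i / (∑ j, c j * w A j) * ((1 - 2 * c i) * σ + 1)) ∧
    (2 < σ → c i = 0 → 0 < gradPhiSigma A σ c i) ∧
    (2 < σ → c i = 1 → gradPhiSigma A σ c i < 0) := by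
  have hc0 : ∀ j, 0 ≤ c j := fun j => by rcases hdisc j with h | h <;> rw [h] <;> norm_num
  have hc1 : ∀ j, c j ≤ 1 := fun j => by rcases hdisc j with h | h <;> rw [h] <;> norm_num
  set acv := ∑ j, c j * w A j with hacv
  set acc := ∑ k, ∑ j, c k * A k j * c j with hacc
  set aic := ∑ j, A i j * c j with haic
  have hacc0 : 0 ≤ acc := by
    apply Finset.sum_nonneg; intro k _; apply Finset.sum_nonneg; intro j _
    exact mul_nonneg (mul_nonneg (hc0 k) (hnonneg k j)) (hc0 j)
  have haccle : acc ≤ acv := by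
    apply Finset.sum_le_sum; intro k _
    have : ∑ j, c k * A k j * c j ≤ ∑ j, c k * A k j := by
      apply Finset.sum_le_sum; intro j _
      calc c k * A k j * c j ≤ c k * A k j * 1 := by
            apply mul_le_mul_of_nonneg_left (hc1 j) (mul_nonneg (hc0 k) (hnonneg k j))
        _ = c k * A k j := by ring
    calc (∑ j, c k * A k j * c j) ≤ ∑ j, c k * A k j := this
      _ = c k * w A k := by rw [w, Finset.mul_sum]
  have haic0 : 0 ≤ aic := Finset.sum_nonneg fun j _ => mul_nonneg (hnonneg i j) (hc0 j)
  have haicle : aic ≤ w A i := by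
    rw [haic, w]
    apply Finset.sum_le_sum; intro j _
    calc A i j * c j ≤ A i j * 1 := mul_le_mul_of_nonneg_left (hc1 j) (hnonneg i j)
      _ = A i j := by ring
  have hwi := hw i
  have hratio_pos : 0 < w A i / acv := div_pos hwi hvol
  have hinner_lb : (1 - 2 * c i) * σ - 2 ≤ acc / acv + (1 - 2 * c i) * σ - 2 * aic / w A i := by
    have h1 : 0 ≤ acc / acv := div_nonneg hacc0 hvol.le
    have h2 : 2 * aic / w A i ≤ 2 := by
      rw [div_le_iff₀ hwi]
      nlinarith
    linarith
  have hinner_ub : acc / acv + (1 - 2 * c i) * σ - 2 * aic / w A i ≤ (1 - 2 * c i) * σ + 1 := by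
    have h1 : acc / acv ≤ 1 := by rw [div_le_one hvol]; exact haccle
    have h2 : 0 ≤ 2 * aic / w A i := div_nonneg (by linarith) hwi.le
    linarith
  have hgrad : gradPhiSigma A σ c i =
      w A i / acv * (acc / acv + (1 - 2 * c i) * σ - 2 * aic / w A i) := rfl
  refine ⟨⟨?_, ?_⟩, ?_, ?_⟩
  · rw [hgrad]; exact mul_le_mul_of_nonneg_left hinner_lb hratio_pos.le
  · rw [hgrad]; exact mul_le_mul_of_nonneg_left hinner_ub hratio_pos.le
  · intro hσ2 hci
    rw [hgrad]
    apply mul_pos hratio_pos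
    have : (1 - 2 * c i) * σ - 2 = σ - 2 := by rw [hci]; ring
    linarith [hinner_lb, this ▸ hinner_lb]
  · intro hσ2 hci
    rw [hgrad]
    have : (1 - 2 * c i) * σ + 1 = 1 - σ := by rw [hci]; ring
    have hneg : acc / acv + (1 - 2 * c i) * σ - 2 * aic / w A i < 0 := by
      linarith [hinner_ub, this]
    exact mul_neg_of_pos_of_neg hratio_pos hneg
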